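/- Conversely, suppose the polynomial coefficient functions u, ãⱼ, aⱼ on [0,c] are such that for every (p̃+1)-times continuously differentiable y the stage error satisfies Ẽ(αh) = O(h^{p̃+1}) uniformly in α ∈ [0,c]. Then Γₖ(α) = 0 for all α ∈ [0,c] and all k = 1,...,p̃. -/

import Mathlib

/-- The quantity Γₖ(α) for a stage of a two-step GLM with polynomial
coefficient functions u, ãⱼ, aⱼ and abscissae cⱼ. -/
noncomputable def stageGamma (s : ℕ) (cj : Fin s → ℝ) (u : Polynomial ℝ)
    (ta a : Fin s → Polynomial ℝ) (k : ℕ) (α : ℝ) : ℝ :=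
  (1 / (Nat.factorial (k - 1) : ℝ)) *
    ((1 - u.eval α) * (-1) ^ k / k
      + ∑ j, (ta j).eval α * (-(1 - cj j)) ^ (k - 1)
      + ∑ j, (a j).eval α * (cj j) ^ (k - 1)
      - α ^ k / k)

/-- The stage-error function Ẽ(αh) of a two-step GLM stage applied to a
function y. -/
noncomputable def stageError (s : ℕ) (cj : Fin s → ℝ) (u : Polynomial ℝ)
    (ta a : Fin s → Polynomial ℝ) (y : ℝ → ℝ) (h α : ℝ) : ℝ :=
  (1 - u.eval α) * y (-h) + u.eval α * y 0
    + h * ∑ j, (ta j).eval α * deriv y (-h + cj j * h)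
    + h * ∑ j, (a j).eval α * deriv y (cj j * h)
    - y (α * h)

/-- Conversely: if for every (p̃+1)-times continuously differentiable y the
stage error is O(h^{p̃+1}) uniformly in α ∈ [0,c], then Γₖ vanishes on [0,c]
for k = 1,...,p̃. -/
theorem stmt10 (s : ℕ) (c : ℝ) (hc : 0 ≤ c) (cj : Fin s → ℝ)
    (hcj : ∀ j, cj j ∈ Set.Icc (0:ℝ) 1)
    (u : Polynomial ℝ) (ta a : Fin s → Polynomial ℝ) (p : ℕ)
    (hbound : ∀ y : ℝ → ℝ, ContDiff ℝ (p + 1) y →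
      ∃ D > (0:ℝ), ∃ H > (0:ℝ), ∀ α ∈ Set.Icc 0 c, ∀ h ∈ Set.Icc (0:ℝ) H,
        |stageError s cj u ta a y h α| ≤ D * h ^ (p + 1)) :
    ∀ α ∈ Set.Icc 0 c, ∀ k, 1 ≤ k → k ≤ p →
      stageGamma s cj u ta a k α = 0 := by
  
  intro α hα k hk1 hkp
  obtain ⟨m, rfl⟩ : ∃ m, k = m + 1 := ⟨k - 1, (Nat.succ_pred_eq_of_pos hk1).symm⟩
  set T : ℝ := (1 - u.eval α) * (-1) ^ (m + 1)
      + (m + 1 : ℝ) * (∑ j, (ta j).eval α * (cj j - 1) ^ m)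
      + (m + 1 : ℝ) * (∑ j, (a j).eval α * (cj j) ^ m)
      - α ^ (m + 1) with hT
  set y : ℝ → ℝ := fun t => t ^ (m + 1) with hy
  have hyC : ContDiff ℝ (p + 1) y := contDiff_id.pow (m + 1)
  have hcomp : ∀ h : ℝ, stageError s cj u ta a y h α = h ^ (m + 1) * T := by
    intro h
    have hder : ∀ x : ℝ, deriv y x = (m + 1 : ℝ) * x ^ m := by
      intro x
      simp [hy, deriv_pow]
    have e1 : ∑ j, (ta j).eval α * deriv y (-h + cj j * h)
        = (∑ j, (ta j).eval α * (cj j - 1) ^ m) * ((m + 1 : ℝ) * h ^ m) := by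
      rw [Finset.sum_mul]
      refine Finset.sum_congr rfl fun j _ => ?_
      rw [hder, show -h + cj j * h = (cj j - 1) * h by ring, mul_pow]
      ring
    have e2 : ∑ j, (a j).eval α * deriv y (cj j * h)
        = (∑ j, (a j).eval α * (cj j) ^ m) * ((m + 1 : ℝ) * h ^ m) := by
      rw [Finset.sum_mul]
      refine Finset.sum_congr rfl fun j _ => ?_
      rw [hder, mul_pow]
      ring
    simp only [stageError]
    rw [e1, e2]
    simp only [hy, hT]
    rw [show (0:ℝ) ^ (m+1) = 0 from zero_pow (Nat.succ_ne_zero m),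
      show (-h : ℝ) ^ (m+1) = (-1)^(m+1) * h^(m+1) by rw [neg_pow],
      mul_pow]
    ring
  obtain ⟨D, hD, H, hH, hb⟩ := hbound y hyC
  have hTz : T = 0 := by
    by_contra hTne
    set h0 : ℝ := min H (min 1 (|T| / (2 * D))) with hh0
    have hTpos : 0 < |T| := abs_pos.mpr hTne
    have h0pos : 0 < h0 := by
      apply lt_min hH
      apply lt_min one_pos
      positivity
    have h0H : h0 ≤ H := min_le_left _ _
    have h01 : h0 ≤ 1 := le_trans (min_le_right _ _) (min_le_left _ _)
    have h0T : h0 ≤ |T| / (2 * D) := le_trans (min_le_right _ _) (min_le_right _ _)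
    have hb0 := hb α hα h0 ⟨le_of_lt h0pos, h0H⟩
    rw [hcomp h0, abs_mul, abs_pow, abs_of_pos h0pos] at hb0
    have hple : h0 ^ (p + 1) ≤ h0 ^ (m + 1) * h0 := by
      rw [← pow_succ]
      exact pow_le_pow_of_le_one (le_of_lt h0pos) h01 (by omega)
    have key : h0 ^ (m + 1) * |T| ≤ D * (h0 ^ (m + 1) * h0) :=
      le_trans hb0 (by nlinarith)
    have hpow : 0 < h0 ^ (m + 1) := pow_pos h0pos _
    have h1 : |T| ≤ D * h0 := by
      rw [mul_comm] at key
      nlinarith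
    have h2 : D * h0 ≤ |T| / 2 := by
      calc D * h0 ≤ D * (|T| / (2 * D)) := by nlinarith
        _ = |T| / 2 := by field_simp
    linarith
  have hinner : (1 - u.eval α) * (-1) ^ (m + 1) / (m + 1 : ℕ)
      + ∑ j, (ta j).eval α * (-(1 - cj j)) ^ (m + 1 - 1)
      + ∑ j, (a j).eval α * (cj j) ^ (m + 1 - 1)
      - α ^ (m + 1) / (m + 1 : ℕ) = 0 := by
    have hsimp : ∀ j, (-(1 - cj j) : ℝ) = cj j - 1 := fun j => by ring
    simp only [Nat.add_sub_cancel, hsimp]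
    have hm : ((m : ℝ) + 1) ≠ 0 := by positivity
    have := hTz
    rw [hT] at this
    push_cast
    field_simp
    linarith [this]
  simp only [stageGamma, hinner, mul_zero]
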